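/- If Q = R + S where R and S are real symmetric n×n matrices, Q is positive-definite, and R is positive-semidefinite with 0 as an eigenvalue, then the largest eigenvalue of Q⁻¹S equals 1. -/

import Mathlib

open Matrix


/-- If `Q = R + S` with `R`, `S` real symmetric, `Q` positive definite, and `R`
positive semidefinite with `0` as an eigenvalue, then the largest eigenvalue of
`Q⁻¹ * S` equals `1`. -/
theorem stmt0 (n : ℕ) (R S Q : Matrix (Fin n) (Fin n) ℝ)
    (hRsymm : R.IsSymm) (hSsymm : S.IsSymm)
    (hQ : Q = R + S) (hQpd : Q.PosDef) (hRpsd : R.PosSemidef)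
    (hRsing : ∃ v : Fin n → ℝ, v ≠ 0 ∧ R.mulVec v = 0) :
    IsGreatest {μ : ℝ | ∃ v : Fin n → ℝ, v ≠ 0 ∧ (Q⁻¹ * S).mulVec v = μ • v} 1 := by
  have hdet : IsUnit Q.det := isUnit_iff_ne_zero.mpr hQpd.det_pos.ne'
  have hQinv : Q * Q⁻¹ = 1 := Matrix.mul_nonsing_inv Q hdet
  have hQinv' : Q⁻¹ * Q = 1 := Matrix.nonsing_inv_mul Q hdet
  constructor
  · obtain ⟨v, hv, hRv⟩ := hRsing
    refine ⟨v, hv, ?_⟩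
    have hSv : S.mulVec v = Q.mulVec v := by
      have : Q.mulVec v = R.mulVec v + S.mulVec v := by
        rw [hQ, Matrix.add_mulVec]
      rw [hRv, zero_add] at this
      rw [this]
    rw [← Matrix.mulVec_mulVec, hSv, Matrix.mulVec_mulVec, hQinv', Matrix.one_mulVec,
      one_smul]
  · rintro μ ⟨v, hv, hμ⟩
    have hSv : S.mulVec v = μ • Q.mulVec v := by
      have := congrArg Q.mulVec hμ
      rw [← Matrix.mulVec_mulVec] at hμ
      have h1 : Q.mulVec (Q⁻¹.mulVec (S.mulVec v)) = S.mulVec v := by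
        rw [Matrix.mulVec_mulVec, hQinv, Matrix.one_mulVec]
      rw [hμ, Matrix.mulVec_smul] at h1
      exact h1.symm
    have hRv : R.mulVec v = (1 - μ) • Q.mulVec v := by
      have : R.mulVec v = Q.mulVec v - S.mulVec v := by
        rw [hQ, Matrix.add_mulVec]; abel
      rw [this, hSv, sub_smul, one_smul]
    have hRnn : 0 ≤ v ⬝ᵥ R.mulVec v := by
      have := hRpsd.dotProduct_mulVec_nonneg v
      simpa using this
    have hQpos : 0 < v ⬝ᵥ Q.mulVec v := by
      have := hQpd.dotProduct_mulVec_pos hv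
      simpa using this
    rw [hRv, dotProduct_smul, smul_eq_mul] at hRnn
    nlinarith
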